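/- A bipartite graph G on vertex sets of sizes n1 and n2 is minimally locally completable for rank-1 rectangular matrices if and only if G is a forest (equivalently, a (1,1)-tight sparse bipartite graph on each component). Concretely: for generic nonzero u : [n1] → R, v : [n2] → R, the system u_i ẏ_j + v_j ẋ_i = 0 over edges (i,j) has solution space of dimension exactly n1 + n2 − |E|, which equals the number of trivial motions 1 per component if and only if G is acyclic with appropriate edge count. -/

import Mathlib

open Matrix

namespace Stmt9Aux

variable {n1 n2 : ℕ}

def row (u : Fin n1 → ℝ) (v : Fin n2 → ℝ) (e : Fin n1 × Fin n2) : Fin n1 ⊕ Fin n2 → ℝ :=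
  Sum.elim (fun i => if i = e.1 then v e.2 else 0) (fun j => if j = e.2 then u e.1 else 0)

def G (E : Finset (Fin n1 × Fin n2)) : SimpleGraph (Fin n1 ⊕ Fin n2) :=
  SimpleGraph.fromEdgeSet
    {s : Sym2 (Fin n1 ⊕ Fin n2) | ∃ e ∈ E, s = s(Sum.inl e.1, Sum.inr e.2)}

lemma adj_iff {E : Finset (Fin n1 × Fin n2)} {a b : Fin n1 ⊕ Fin n2} :
    (G E).Adj a b ↔ ∃ e ∈ E,
      (a = Sum.inl e.1 ∧ b = Sum.inr e.2) ∨ (a = Sum.inr e.2 ∧ b = Sum.inl e.1) := by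
  constructor
  · rintro ⟨⟨e, he, hs⟩, hne⟩
    rw [Sym2.eq_iff] at hs
    exact ⟨e, he, by tauto⟩
  · rintro ⟨e, he, h | h⟩
    · exact ⟨⟨e, he, by rw [h.1, h.2]⟩, by simp [h.1, h.2]⟩
    · exact ⟨⟨e, he, by rw [h.1, h.2, Sym2.eq_swap]⟩, by simp [h.1, h.2]⟩

/-- the "dot product" of a row with a vector -/
lemma dot_row (u : Fin n1 → ℝ) (v : Fin n2 → ℝ) (f : Fin n1 × Fin n2)
    (w : Fin n1 ⊕ Fin n2 → ℝ) :
    ∑ a, row u v f a * w a = v f.2 * w (Sum.inl f.1) + u f.1 * w (Sum.inr f.2) := by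
  simp [row, Fintype.sum_sum_type, ite_mul, Finset.sum_ite_eq']

lemma indep (u : Fin n1 → ℝ) (v : Fin n2 → ℝ) (hu : ∀ i, u i ≠ 0) (hv : ∀ j, v j ≠ 0)
    {E : Finset (Fin n1 × Fin n2)} (h : (G E).IsAcyclic) :
    LinearIndependent ℝ (fun e : {e // e ∈ E} => row u v e.val) := by
  classical
  rw [Fintype.linearIndependent_iff]
  intro g hg e
  obtain ⟨⟨i, j⟩, he⟩ := e
  -- the bridge property
  have hadj : (G E).Adj (Sum.inl i) (Sum.inr j) := adj_iff.mpr ⟨(i, j), he, Or.inl ⟨rfl, rfl⟩⟩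
  have hb := SimpleGraph.isAcyclic_iff_forall_adj_isBridge.mp h hadj
  rw [SimpleGraph.isBridge_iff] at hb
  set G' := G E \ SimpleGraph.fromEdgeSet {s(Sum.inl i, Sum.inr j)} with hG'
  have hnr : ¬ G'.Reachable (Sum.inl i) (Sum.inr j) := hb
  -- the test vector
  set w : Fin n1 ⊕ Fin n2 → ℝ := fun a =>
    if G'.Reachable (Sum.inl i) a then Sum.elim u (fun j' => -(v j')) a else 0 with hw
  -- pair the dependence with w
  have key : ∑ f : {e // e ∈ E}, g f * ∑ a, row u v f.val a * w a = 0 := by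
    have := congrArg (fun z : Fin n1 ⊕ Fin n2 → ℝ => ∑ a, z a * w a) hg
    simpa [Finset.sum_apply, Finset.sum_mul, Finset.sum_comm (γ := Fin n1 ⊕ Fin n2),
      mul_assoc, mul_add, Finset.mul_sum] using this
  -- all terms except f = e vanish
  have hsingle : ∀ f : {e // e ∈ E}, f ≠ ⟨(i, j), he⟩ →
      g f * ∑ a, row u v f.val a * w a = 0 := by
    rintro ⟨⟨i', j'⟩, hf⟩ hne
    have hne' : ((i', j') : Fin n1 × Fin n2) ≠ (i, j) := by
      simpa [Subtype.ext_iff] using hne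
    have hadj' : G'.Adj (Sum.inl i') (Sum.inr j') := by
      constructor
      · exact adj_iff.mpr ⟨(i', j'), hf, Or.inl ⟨rfl, rfl⟩⟩
      · intro hcon
        rw [SimpleGraph.fromEdgeSet_adj] at hcon
        obtain ⟨hs, -⟩ := hcon
        simp only [Set.mem_singleton_iff, Sym2.eq_iff] at hs
        rcases hs with ⟨h1, h2⟩ | ⟨h1, h2⟩
        · rw [Sum.inl.injEq] at h1
          rw [Sum.inr.injEq] at h2
          exact hne' (by simp [h1, h2])
        · exact absurd h1 (by simp)
    rw [dot_row]
    by_cases hr : G'.Reachable (Sum.inl i) (Sum.inl i')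
    · have hr2 : G'.Reachable (Sum.inl i) (Sum.inr j') := hr.trans hadj'.reachable
      simp only [hw, if_pos hr, if_pos hr2, Sum.elim_inl, Sum.elim_inr]
      ring
    · have hr2 : ¬ G'.Reachable (Sum.inl i) (Sum.inr j') := fun hr2 =>
        hr (hr2.trans hadj'.symm.reachable)
      simp [hw, if_neg hr, if_neg hr2]
  rw [Finset.sum_eq_single (⟨(i, j), he⟩ : {e // e ∈ E})
    (fun f _ hne => hsingle f hne) (by simp)] at key
  rw [dot_row] at key
  have hwi : w (Sum.inl i) = u i := by simp [hw, SimpleGraph.Reachable.refl]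
  have hwj : w (Sum.inr j) = 0 := by simp [hw, if_neg hnr]
  rw [hwi, hwj] at key
  have : g ⟨(i, j), he⟩ * (v j * u i) = 0 := by linarith [key]
  rcases mul_eq_zero.mp this with h0 | h0
  · exact h0
  · exact absurd h0 (mul_ne_zero (hv j) (hu i))

section Cycle

variable (u : Fin n1 → ℝ) (v : Fin n2 → ℝ) {E : Finset (Fin n1 × Fin n2)}

def sgn : Fin n1 ⊕ Fin n2 → ℝ := Sum.elim (fun _ => 1) (fun _ => -1)

noncomputable def F (u : Fin n1 → ℝ) (v : Fin n2 → ℝ) (a : Fin n1 ⊕ Fin n2) :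
    Fin n1 ⊕ Fin n2 → ℝ :=
  Pi.single a (sgn a / Sum.elim u v a)

lemma dart_spec (d : (G E).Dart) : ∃ e ∈ E,
    (d.fst = Sum.inl e.1 ∧ d.snd = Sum.inr e.2) ∨
      (d.fst = Sum.inr e.2 ∧ d.snd = Sum.inl e.1) :=
  adj_iff.mp d.adj

noncomputable def pr (d : (G E).Dart) : Fin n1 × Fin n2 := (dart_spec d).choose

lemma pr_mem (d : (G E).Dart) : pr d ∈ E := (dart_spec d).choose_spec.1

lemma pr_spec (d : (G E).Dart) :
    (d.fst = Sum.inl (pr d).1 ∧ d.snd = Sum.inr (pr d).2) ∨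
      (d.fst = Sum.inr (pr d).2 ∧ d.snd = Sum.inl (pr d).1) :=
  (dart_spec d).choose_spec.2

lemma edge_eq (d : (G E).Dart) : d.edge = s(Sum.inl (pr d).1, Sum.inr (pr d).2) := by
  rcases pr_spec d with ⟨h1, h2⟩ | ⟨h1, h2⟩
  · show s(d.fst, d.snd) = _
    rw [← h1, ← h2]
  · show s(d.fst, d.snd) = _
    rw [Sym2.eq_swap, ← h1, ← h2]

noncomputable def γ (d : (G E).Dart) : ℝ := sgn d.fst / (u (pr d).1 * v (pr d).2)

lemma dart_identity (hu : ∀ i, u i ≠ 0) (hv : ∀ j, v j ≠ 0) (d : (G E).Dart) :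
    γ u v d • row u v (pr d) = F u v d.fst - F u v d.snd := by
  have hne1 := hu (pr d).1
  have hne2 := hv (pr d).2
  funext x
  rcases pr_spec d with ⟨h1, h2⟩ | ⟨h1, h2⟩ <;>
    rcases x with i' | j' <;>
    simp only [γ, h1, h2, F, sgn, row, Sum.elim_inl, Sum.elim_inr, Pi.sub_apply,
      Pi.smul_apply, smul_eq_mul, Pi.single_apply, Sum.inl.injEq, Sum.inr.injEq,
      reduceCtorEq, if_false, sub_zero, zero_sub] <;>
    split_ifs <;> field_simp <;> ring

lemma telescope (hu : ∀ i, u i ≠ 0) (hv : ∀ j, v j ≠ 0) {a b : Fin n1 ⊕ Fin n2}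
    (p : (G E).Walk a b) :
    (p.darts.map (fun d => γ u v d • row u v (pr d))).sum = F u v a - F u v b := by
  induction p with
  | nil => simp
  | cons h q ih =>
    rw [SimpleGraph.Walk.darts_cons, List.map_cons, List.sum_cons, ih,
      dart_identity u v hu hv]
    abel

lemma not_indep (hu : ∀ i, u i ≠ 0) (hv : ∀ j, v j ≠ 0) (h : ¬ (G E).IsAcyclic) :
    ¬ LinearIndependent ℝ (fun e : {e // e ∈ E} => row u v e.val) := by
  classical
  simp only [SimpleGraph.IsAcyclic, not_forall, not_not] at h
  obtain ⟨a, c, hc⟩ := h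
  intro hind
  rw [Fintype.linearIndependent_iff] at hind
  have hnodupE : c.edges.Nodup := hc.isTrail.edges_nodup
  have hndarts : c.darts.Nodup := by
    have : (c.darts.map SimpleGraph.Dart.edge).Nodup := hnodupE
    exact this.of_map _
  set π : (G E).Dart → {e // e ∈ E} := fun d => ⟨pr d, pr_mem d⟩ with hπ
  set g : {e // e ∈ E} → ℝ :=
    fun e => ∑ d ∈ c.darts.toFinset.filter (fun d => π d = e), γ u v d with hg
  have hsum : ∑ e : {e // e ∈ E}, g e • row u v e.val = 0 := by
    calc ∑ e : {e // e ∈ E}, g e • row u v e.val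
        = ∑ e : {e // e ∈ E}, ∑ d ∈ c.darts.toFinset.filter (fun d => π d = e),
            γ u v d • row u v (pr d) := by
          refine Finset.sum_congr rfl fun e _ => ?_
          rw [hg, Finset.sum_smul]
          refine Finset.sum_congr rfl fun d hd => ?_
          have hde : π d = e := (Finset.mem_filter.mp hd).2
          have : pr d = e.val := congrArg Subtype.val hde
          rw [this]
      _ = ∑ d ∈ c.darts.toFinset, γ u v d • row u v (pr d) :=
          Finset.sum_fiberwise_of_maps_to (fun d _ => Finset.mem_univ _) _
      _ = (c.darts.map (fun d => γ u v d • row u v (pr d))).sum :=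
          List.sum_toFinset _ hndarts
      _ = F u v a - F u v a := telescope u v hu hv c
      _ = 0 := sub_self _
  have hne : c.darts ≠ [] := by
    intro h0
    have h3 := hc.three_le_length
    have : c.darts.length = c.length := SimpleGraph.Walk.length_darts c
    rw [h0] at this
    simp at this
    omega
  set d0 := c.darts.head hne with hd0def
  have hd0 : d0 ∈ c.darts := List.head_mem hne
  have hfilter : c.darts.toFinset.filter (fun d => π d = π d0) = {d0} := by
    ext d
    simp only [Finset.mem_filter, List.mem_toFinset, Finset.mem_singleton]
    constructor
    · rintro ⟨hdmem, hdeq⟩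
      have hpr : pr d = pr d0 := congrArg Subtype.val hdeq
      have hedge : d.edge = d0.edge := by rw [edge_eq, edge_eq, hpr]
      exact List.inj_on_of_nodup_map hnodupE hdmem hd0 hedge
    · rintro rfl
      exact ⟨hd0, rfl⟩
  have hg0 : g (π d0) ≠ 0 := by
    rw [hg]
    simp only [hfilter, Finset.sum_singleton, γ]
    refine div_ne_zero ?_ (mul_ne_zero (hu _) (hv _))
    cases h' : d0.fst <;> simp [sgn, h']
  exact hg0 (hind g hsum (π d0))

end Cycle


lemma trivial_motion (u : Fin n1 → ℝ) (v : Fin n2 → ℝ) (e : Fin n1 × Fin n2) :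
    ∑ a, row u v e a * Sum.elim u (fun j => -(v j)) a = 0 := by
  rw [dot_row]
  simp only [Sum.elim_inl, Sum.elim_inr]
  ring

end Stmt9Aux

/-- A bipartite graph is minimally locally completable for rank-1 rectangular matrices iff
it is a forest: for nonzero u, v the system u_i ẏ_j + v_j ẋ_i = 0 over edges has solution
space of dimension exactly n1 + n2 − |E| iff the graph is acyclic. -/
theorem stmt_9 (n1 n2 : ℕ) (E : Finset (Fin n1 × Fin n2))
    (u : Fin n1 → ℝ) (v : Fin n2 → ℝ) (hu : ∀ i, u i ≠ 0) (hv : ∀ j, v j ≠ 0) :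
    let M : Matrix {e // e ∈ E} (Fin n1 ⊕ Fin n2) ℝ :=
      Matrix.of fun e => Sum.elim
        (fun i => if i = (e : Fin n1 × Fin n2).1 then v (e : Fin n1 × Fin n2).2 else 0)
        (fun j => if j = (e : Fin n1 × Fin n2).2 then u (e : Fin n1 × Fin n2).1 else 0)
    (SimpleGraph.fromEdgeSet
        {s : Sym2 (Fin n1 ⊕ Fin n2) | ∃ e ∈ E, s = s(Sum.inl e.1, Sum.inr e.2)}).IsAcyclic ↔
      Module.finrank ℝ (LinearMap.ker M.mulVecLin) = n1 + n2 - E.card := by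
  intro M
  classical
  have hcardV : Module.finrank ℝ ((Fin n1 ⊕ Fin n2) → ℝ) = n1 + n2 := by
    simp [Module.finrank_fintype_fun_eq_card]
  have hrn : M.rank + Module.finrank ℝ (LinearMap.ker M.mulVecLin) = n1 + n2 := by
    rw [Matrix.rank, ← hcardV]
    exact LinearMap.finrank_range_add_finrank_ker _
  have hspan : M.rank = Module.finrank ℝ (Submodule.span ℝ
      (Set.range (fun e : {e // e ∈ E} => Stmt9Aux.row u v e.val))) := by
    have h := Matrix.rank_eq_finrank_span_cols Mᵀ
    rw [Matrix.rank_transpose] at h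
    exact h
  have hcard : Fintype.card {e // e ∈ E} = E.card := Fintype.card_coe E
  constructor
  · intro hac
    have hind := Stmt9Aux.indep u v hu hv (E := E) hac
    have hcr := linearIndependent_iff_card_eq_finrank_span.mp hind
    rw [hcard] at hcr
    have hr : M.rank = E.card := by rw [hspan, Set.finrank] at *; omega
    omega
  · intro hdim
    by_contra hac
    have hnind := Stmt9Aux.not_indep u v hu hv (E := E) hac
    have hlt : M.rank < E.card := by
      have hle : (Set.range (fun e : {e // e ∈ E} => Stmt9Aux.row u v e.val)).finrank ℝ
          ≤ Fintype.card {e // e ∈ E} := finrank_range_le_card _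
      have hne : Fintype.card {e // e ∈ E}
          ≠ (Set.range (fun e : {e // e ∈ E} => Stmt9Aux.row u v e.val)).finrank ℝ :=
        fun hh => hnind (linearIndependent_iff_card_eq_finrank_span.mpr hh)
      rw [hspan, ← Set.finrank] at *
      omega
    have hEpos : 0 < E.card := by omega
    obtain ⟨e0, he0⟩ : E.Nonempty := Finset.card_pos.mp hEpos
    set w0 : Fin n1 ⊕ Fin n2 → ℝ := Sum.elim u (fun j => -(v j)) with hw0def
    have hmem : w0 ∈ LinearMap.ker M.mulVecLin := by
      rw [LinearMap.mem_ker]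
      funext e
      show ∑ a, Stmt9Aux.row u v e.val a * w0 a = 0
      exact Stmt9Aux.trivial_motion u v e.val
    have hw0ne : w0 ≠ 0 := by
      intro h0
      have := congrFun h0 (Sum.inl e0.1)
      simp [hw0def] at this
      exact hu e0.1 this
    have hker1 : 0 < Module.finrank ℝ (LinearMap.ker M.mulVecLin) := by
      rw [Module.finrank_pos_iff]
      exact ⟨⟨w0, hmem⟩, 0, by simp [Subtype.ext_iff, hw0ne]⟩
    omega
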